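/- In any finite weighted graph G, an edge e = (u, v) belongs to some minimum spanning forest of G if and only if there is no path from u to v in G consisting entirely of edges with weight strictly less than w(e). -/

import Mathlib

open SimpleGraph Finset

variable {V : Type*} {W : Type*} [AddCommMonoid W] [LinearOrder W] [IsOrderedAddMonoid W]

/-- The simple graph whose edges are a given finite set of (unordered) pairs. -/
def fromEdges (F : Finset (Sym2 V)) : SimpleGraph V := SimpleGraph.fromEdgeSet ↑F

/-- Two edge sets induce the same connected components (reachability). -/
def SameComponents (E F : Finset (Sym2 V)) : Prop :=
  ∀ a b : V, (fromEdges E).Reachable a b ↔ (fromEdges F).Reachable a b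

/-- `F` is a spanning forest of the graph with edge set `E`. -/
def IsSpanningForest (E F : Finset (Sym2 V)) : Prop :=
  F ⊆ E ∧ (fromEdges F).IsAcyclic ∧ SameComponents E F

/-- `F` is a minimum spanning forest of the graph with edge set `E` and weights `w`. -/
def IsMSF (E : Finset (Sym2 V)) (w : Sym2 V → W) (F : Finset (Sym2 V)) : Prop :=
  IsSpanningForest E F ∧ ∀ F', IsSpanningForest E F' → F.sum w ≤ F'.sum w

/-- `T` is a minimum spanning tree of the (connected) graph with edge set `E`. -/
def IsMST (E : Finset (Sym2 V)) (w : Sym2 V → W) (T : Finset (Sym2 V)) : Prop :=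
  IsMSF E w T ∧ (fromEdges T).Connected

section Aux

lemma fromEdges_adj {F : Finset (Sym2 V)} {a b : V} :
    (fromEdges F).Adj a b ↔ s(a, b) ∈ F ∧ a ≠ b := by
  simp [fromEdges, SimpleGraph.fromEdgeSet_adj]

lemma mem_edgeSet_fromEdges {F : Finset (Sym2 V)} {f : Sym2 V} :
    f ∈ (fromEdges F).edgeSet ↔ f ∈ F ∧ ¬ f.IsDiag := by
  rw [fromEdges, SimpleGraph.edgeSet_fromEdgeSet]; simp

lemma fromEdges_mono {E F : Finset (Sym2 V)} (h : E ⊆ F) : fromEdges E ≤ fromEdges F := by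
  intro a b hab
  rw [fromEdges_adj] at *
  exact ⟨h hab.1, hab.2⟩

lemma acyclic_anti {G H : SimpleGraph V} (h : H ≤ G) (hG : G.IsAcyclic) : H.IsAcyclic :=
  fun _v c hc => hG (c.mapLe h) (hc.mapLe h)

lemma fromEdges_erase_eq [DecidableEq V] (F : Finset (Sym2 V)) (e : Sym2 V) :
    fromEdges (F.erase e) = fromEdges F \ SimpleGraph.fromEdgeSet {e} := by
  ext a b
  simp only [fromEdges_adj, Finset.mem_erase, sdiff_adj, SimpleGraph.fromEdgeSet_adj,
    Set.mem_singleton_iff, fromEdges, SimpleGraph.fromEdgeSet_adj, Finset.mem_coe]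
  constructor
  · rintro ⟨⟨h1, h2⟩, h3⟩
    exact ⟨⟨h2, h3⟩, fun hh => h1 hh.1⟩
  · rintro ⟨⟨h1, h2⟩, h3⟩
    exact ⟨⟨fun hh => h3 ⟨hh, h2⟩, h1⟩, h2⟩

lemma not_reachable_erase_of_acyclic [DecidableEq V] {F : Finset (Sym2 V)}
    (hF : (fromEdges F).IsAcyclic) {a b : V} (hab : a ≠ b) (hmem : s(a, b) ∈ F) :
    ¬ (fromEdges (F.erase s(a, b))).Reachable a b := by
  have hadj : (fromEdges F).Adj a b := fromEdges_adj.2 ⟨hmem, hab⟩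
  have hbr := (SimpleGraph.isAcyclic_iff_forall_adj_isBridge.mp hF) hadj
  rw [SimpleGraph.isBridge_iff] at hbr
  rw [fromEdges_erase_eq]
  exact hbr

lemma reach_split [DecidableEq V] {F : Finset (Sym2 V)} {a b x y : V}
    (h : (fromEdges F).Reachable x y) :
    (fromEdges (F.erase s(a, b))).Reachable x y ∨
      ((fromEdges (F.erase s(a, b))).Reachable x a ∧ (fromEdges (F.erase s(a, b))).Reachable b y) ∨
      ((fromEdges (F.erase s(a, b))).Reachable x b ∧ (fromEdges (F.erase s(a, b))).Reachable a y) := by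
  obtain ⟨p⟩ := h
  induction p with
  | nil => exact Or.inl (Reachable.refl _)
  | @cons x c y hxc q ih =>
    by_cases hec : s(x, c) = s(a, b)
    · rw [Sym2.eq_iff] at hec
      rcases hec with ⟨rfl, rfl⟩ | ⟨rfl, rfl⟩
      · rcases ih with h1 | ⟨h1, h2⟩ | ⟨h1, h2⟩
        · exact Or.inr (Or.inl ⟨Reachable.refl _, h1⟩)
        · exact Or.inr (Or.inl ⟨Reachable.refl _, h2⟩)
        · exact Or.inl h2
      · rcases ih with h1 | ⟨h1, h2⟩ | ⟨h1, h2⟩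
        · exact Or.inr (Or.inr ⟨Reachable.refl _, h1⟩)
        · exact Or.inl h2
        · exact Or.inr (Or.inr ⟨Reachable.refl _, h2⟩)
    · have hadj : (fromEdges (F.erase s(a, b))).Adj x c :=
        fromEdges_adj.2 ⟨Finset.mem_erase.2 ⟨hec, (fromEdges_adj.1 hxc).1⟩, hxc.ne⟩
      rcases ih with h1 | ⟨h1, h2⟩ | ⟨h1, h2⟩
      · exact Or.inl (hadj.reachable.trans h1)
      · exact Or.inr (Or.inl ⟨hadj.reachable.trans h1, h2⟩)
      · exact Or.inr (Or.inr ⟨hadj.reachable.trans h1, h2⟩)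

lemma acyclic_insert [DecidableEq V] {F : Finset (Sym2 V)} {a b : V}
    (hF : (fromEdges F).IsAcyclic) (hreach : ¬ (fromEdges F).Reachable a b) :
    (fromEdges (insert s(a, b) F)).IsAcyclic := by
  intro x c hc
  by_cases hmem : s(a, b) ∈ c.edges
  · have hkey : (fromEdges (insert s(a, b) F)).Adj a b ∧
        ((fromEdges (insert s(a, b) F)) \ SimpleGraph.fromEdgeSet {s(a, b)}).Reachable a b :=
      SimpleGraph.adj_and_reachable_delete_edges_iff_exists_cycle.mpr ⟨x, c, hc, hmem⟩
    apply hreach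
    refine hkey.2.mono ?_
    rw [← fromEdges_erase_eq]
    apply fromEdges_mono
    intro f hf
    rw [Finset.mem_erase, Finset.mem_insert] at hf
    tauto
  · have hsub : ∀ f ∈ c.edges, f ∈ (fromEdges F).edgeSet := by
      intro f hf
      have h1 := c.edges_subset_edgeSet hf
      rw [mem_edgeSet_fromEdges] at h1 ⊢
      rcases Finset.mem_insert.mp h1.1 with h2 | h2
      · exact absurd (h2 ▸ hf) hmem
      · exact ⟨h2, h1.2⟩
    exact hF (c.transfer _ hsub) (hc.transfer hsub)

lemma exists_crossing_edge [DecidableEq V] {H G' : SimpleGraph V} {x y u' v' : V}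
    (p : H.Walk x y) (hx : G'.Reachable x u') (hy : G'.Reachable y v')
    (huv : ¬ G'.Reachable u' v')
    (hmid : ∀ z ∈ p.support, G'.Reachable z u' ∨ G'.Reachable z v') :
    ∃ a b : V, s(a, b) ∈ p.edges ∧ G'.Reachable a u' ∧ G'.Reachable b v' := by
  induction p with
  | nil => exact absurd (hx.symm.trans hy) huv
  | @cons x c y hxc q ih =>
    have hc : G'.Reachable c u' ∨ G'.Reachable c v' := by
      apply hmid
      rw [SimpleGraph.Walk.support_cons]
      exact List.mem_cons_of_mem _ q.start_mem_support
    rcases hc with hc | hc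
    · obtain ⟨a, b, h1, h2, h3⟩ := ih hc hy (fun z hz => hmid z (by
        rw [SimpleGraph.Walk.support_cons]; exact List.mem_cons_of_mem _ hz))
      exact ⟨a, b, by rw [SimpleGraph.Walk.edges_cons]; exact List.mem_cons_of_mem _ h1, h2, h3⟩
    · exact ⟨x, c, by rw [SimpleGraph.Walk.edges_cons]; exact List.mem_cons_self, hx, hc⟩

lemma exists_spanning_forest [DecidableEq V] (E : Finset (Sym2 V)) :
    ∃ F, IsSpanningForest E F := by
  classical
  obtain ⟨F, hFmem, hmin⟩ := Finset.exists_min_image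
    (E.powerset.filter fun F => SameComponents E F) Finset.card
    ⟨E, Finset.mem_filter.2 ⟨Finset.mem_powerset.2 (Finset.Subset.refl E),
      fun _ _ => Iff.rfl⟩⟩
  rw [Finset.mem_filter, Finset.mem_powerset] at hFmem
  refine ⟨F, hFmem.1, ?_, hFmem.2⟩
  by_contra hcyc
  rw [SimpleGraph.IsAcyclic] at hcyc
  push_neg at hcyc
  obtain ⟨x, c, hc⟩ := hcyc
  have hne : c.edges ≠ [] := by
    intro h
    have h3 := hc.three_le_length
    have h4 := SimpleGraph.Walk.length_edges c
    rw [h] at h4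
    simp at h4
    omega
  obtain ⟨f, hf⟩ := List.exists_mem_of_ne_nil _ hne
  obtain ⟨a, b, rfl⟩ : ∃ a b : V, f = s(a, b) := Sym2.inductionOn f fun a b => ⟨a, b, rfl⟩
  have hkey : (fromEdges F).Adj a b ∧
      ((fromEdges F) \ SimpleGraph.fromEdgeSet {s(a, b)}).Reachable a b :=
    SimpleGraph.adj_and_reachable_delete_edges_iff_exists_cycle.mpr ⟨x, c, hc, hf⟩
  have hab : (fromEdges (F.erase s(a, b))).Reachable a b := by
    rw [fromEdges_erase_eq]; exact hkey.2
  have hsame : SameComponents E (F.erase s(a, b)) := by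
    intro p q
    rw [hFmem.2 p q]
    constructor
    · intro h
      rcases reach_split (a := a) (b := b) h with h1 | ⟨h1, h2⟩ | ⟨h1, h2⟩
      · exact h1
      · exact h1.trans (hab.trans h2)
      · exact h1.trans (hab.symm.trans h2)
    · intro h
      exact h.mono (fromEdges_mono (Finset.erase_subset _ _))
  have hlt := hmin (F.erase s(a, b)) (Finset.mem_filter.2
    ⟨Finset.mem_powerset.2 ((Finset.erase_subset _ _).trans hFmem.1), hsame⟩)
  have hcard := Finset.card_erase_lt_of_mem (fromEdges_adj.1 hkey.1).1
  omega

lemma exists_msf [DecidableEq V] (E : Finset (Sym2 V)) (w : Sym2 V → ℝ) :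
    ∃ F, IsMSF E w F := by
  classical
  obtain ⟨F0, hF0⟩ := exists_spanning_forest E
  obtain ⟨F, hFmem, hmin⟩ := Finset.exists_min_image
    (E.powerset.filter fun F => IsSpanningForest E F) (fun F => F.sum w)
    ⟨F0, Finset.mem_filter.2 ⟨Finset.mem_powerset.2 hF0.1, hF0⟩⟩
  rw [Finset.mem_filter] at hFmem
  exact ⟨F, hFmem.2, fun F' hF' =>
    hmin F' (Finset.mem_filter.2 ⟨Finset.mem_powerset.2 hF'.1, hF'⟩)⟩

end Aux

/-- An edge `{u, v}` belongs to some minimum spanning forest iff there is no path from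
`u` to `v` using only edges of strictly smaller weight. -/
theorem msf_edge_characterization {V : Type*} [Fintype V] [DecidableEq V]
    (E : Finset (Sym2 V)) (w : Sym2 V → ℝ)
    (u v : V) (huv : u ≠ v) (he : s(u, v) ∈ E) :
    (∃ F : Finset (Sym2 V), IsMSF E w F ∧ s(u, v) ∈ F) ↔
      ¬ (fromEdges (E.filter fun f => w f < w s(u, v))).Reachable u v := by
  classical
  constructor
  · -- If e is in some MSF, there is no lighter path.
    rintro ⟨F, ⟨⟨hFE, hFac, hFsame⟩, hFmin⟩, heF⟩ hreach
    obtain ⟨p⟩ := hreach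
    have hGuv : ¬ (fromEdges (F.erase s(u, v))).Reachable u v :=
      not_reachable_erase_of_acyclic hFac huv heF
    have hfilE : (E.filter fun f => w f < w s(u, v)) ⊆ E := Finset.filter_subset _ _
    have hmid : ∀ z ∈ p.support,
        (fromEdges (F.erase s(u, v))).Reachable z u ∨
        (fromEdges (F.erase s(u, v))).Reachable z v := by
      intro z hz
      have hHz : (fromEdges (E.filter fun f => w f < w s(u, v))).Reachable u z :=
        ⟨p.takeUntil z hz⟩
      have hFz : (fromEdges F).Reachable u z :=
        (hFsame u z).mp (hHz.mono (fromEdges_mono hfilE))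
      rcases reach_split (a := u) (b := v) hFz with h1 | ⟨h1, h2⟩ | ⟨h1, h2⟩
      · exact Or.inl h1.symm
      · exact Or.inr h2.symm
      · exact absurd h1 hGuv
    obtain ⟨a, b, hab_mem, hau, hbv⟩ :=
      exists_crossing_edge p (Reachable.refl u) (Reachable.refl v) hGuv hmid
    -- basic facts about the crossing edge
    have hHadj : (fromEdges (E.filter fun f => w f < w s(u, v))).Adj a b :=
      p.adj_of_mem_edges hab_mem
    rw [fromEdges_adj, Finset.mem_filter] at hHadj
    obtain ⟨⟨hfE, hfw⟩, hab⟩ := hHadj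
    have hnab : ¬ (fromEdges (F.erase s(u, v))).Reachable a b := by
      intro hr
      exact hGuv (hau.symm.trans (hr.trans hbv))
    have hf_not : s(a, b) ∉ F.erase s(u, v) := by
      intro hmem
      exact hnab (SimpleGraph.Adj.reachable (fromEdges_adj.2 ⟨hmem, hab⟩))
    -- the improved forest
    set F' := insert s(a, b) (F.erase s(u, v)) with hF'def
    have hm : fromEdges (F.erase s(u, v)) ≤ fromEdges F' :=
      fromEdges_mono (Finset.subset_insert _ _)
    have hF'uv : (fromEdges F').Reachable u v := by
      have hedge : (fromEdges F').Adj a b :=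
        fromEdges_adj.2 ⟨Finset.mem_insert_self _ _, hab⟩
      exact (hau.mono hm).symm.trans (hedge.reachable.trans (hbv.mono hm))
    have hF'sub : F' ⊆ E :=
      Finset.insert_subset hfE ((Finset.erase_subset _ _).trans hFE)
    have hF'sf : IsSpanningForest E F' := by
      refine ⟨hF'sub, ?_, ?_⟩
      · exact acyclic_insert (acyclic_anti (fromEdges_mono (Finset.erase_subset _ _)) hFac) hnab
      · intro x y
        constructor
        · intro h
          rcases reach_split (a := u) (b := v) ((hFsame x y).mp h) with
            h1 | ⟨h1, h2⟩ | ⟨h1, h2⟩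
          · exact h1.mono hm
          · exact (h1.mono hm).trans (hF'uv.trans (h2.mono hm))
          · exact (h1.mono hm).trans (hF'uv.symm.trans (h2.mono hm))
        · intro h
          exact h.mono (fromEdges_mono hF'sub)
    -- weight comparison gives a contradiction
    have hsum : F'.sum w = w s(a, b) + (F.sum w - w s(u, v)) := by
      rw [hF'def, Finset.sum_insert hf_not, Finset.sum_erase_eq_sub heF]
    have hle := hFmin F' hF'sf
    rw [hsum] at hle
    linarith
  · -- If there is no lighter path, some MSF contains e.
    intro hnreach
    obtain ⟨F0, hmsf0⟩ := exists_msf E w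
    by_cases heF0 : s(u, v) ∈ F0
    · exact ⟨F0, hmsf0, heF0⟩
    obtain ⟨⟨hF0E, hF0ac, hF0same⟩, hF0min⟩ := hmsf0
    have hEuv : (fromEdges E).Reachable u v :=
      (fromEdges_adj.2 ⟨he, huv⟩).reachable
    have hF0uv : (fromEdges F0).Reachable u v := (hF0same u v).mp hEuv
    obtain ⟨p0⟩ := hF0uv
    set p : (fromEdges F0).Path u v := p0.toPath with hpdef
    -- find a heavy edge on the path
    have hheavy : ∃ f ∈ (p : (fromEdges F0).Walk u v).edges, ¬ w f < w s(u, v) := by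
      by_contra hall
      push_neg at hall
      have hsub : ∀ f ∈ (p : (fromEdges F0).Walk u v).edges,
          f ∈ (fromEdges (E.filter fun f => w f < w s(u, v))).edgeSet := by
        intro f hf
        have h1 := (p : (fromEdges F0).Walk u v).edges_subset_edgeSet hf
        rw [mem_edgeSet_fromEdges] at h1 ⊢
        exact ⟨Finset.mem_filter.2 ⟨hF0E h1.1, hall f hf⟩, h1.2⟩
      exact hnreach ⟨(p : (fromEdges F0).Walk u v).transfer _ hsub⟩
    obtain ⟨f, hfp, hfw⟩ := hheavy
    rw [not_lt] at hfw
    obtain ⟨a, b, rfl⟩ : ∃ a b : V, f = s(a, b) := Sym2.inductionOn f fun a b => ⟨a, b, rfl⟩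
    have hadjab : (fromEdges F0).Adj a b :=
      (p : (fromEdges F0).Walk u v).adj_of_mem_edges hfp
    have hab : a ≠ b := hadjab.ne
    have hfF0 : s(a, b) ∈ F0 := (fromEdges_adj.1 hadjab).1
    -- removing f disconnects a and b
    have hnab1 : ¬ (fromEdges (F0.erase s(a, b))).Reachable a b :=
      not_reachable_erase_of_acyclic hF0ac hab hfF0
    -- removing f disconnects u and v
    have hnuv1 : ¬ (fromEdges (F0.erase s(a, b))).Reachable u v := by
      rintro ⟨q⟩
      have hq : ∀ g ∈ q.edges, g ∈ (fromEdges F0).edgeSet := by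
        intro g hg
        have h1 := q.edges_subset_edgeSet hg
        rw [mem_edgeSet_fromEdges] at h1 ⊢
        exact ⟨Finset.mem_of_mem_erase h1.1, h1.2⟩
      have hq2 : ∀ g ∈ q.edges, g ≠ s(a, b) := by
        intro g hg
        have h1 := q.edges_subset_edgeSet hg
        rw [mem_edgeSet_fromEdges] at h1
        exact Finset.ne_of_mem_erase h1.1
      have hpe : p = (q.transfer (fromEdges F0) hq).toPath :=
        hF0ac.path_unique p ((q.transfer (fromEdges F0) hq).toPath)
      have hf2 : s(a, b) ∈ ((q.transfer (fromEdges F0) hq).toPath :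
          (fromEdges F0).Walk u v).edges := hpe ▸ hfp
      have hf3 := SimpleGraph.Walk.edges_toPath_subset _ hf2
      rw [SimpleGraph.Walk.edges_transfer] at hf3
      exact hq2 _ hf3 rfl
    -- sides of the cut
    have ha_sup : a ∈ (p : (fromEdges F0).Walk u v).support :=
      SimpleGraph.Walk.fst_mem_support_of_mem_edges _ hfp
    have hb_sup : b ∈ (p : (fromEdges F0).Walk u v).support :=
      SimpleGraph.Walk.snd_mem_support_of_mem_edges _ hfp
    have hreachF0 : ∀ z ∈ (p : (fromEdges F0).Walk u v).support,
        (fromEdges F0).Reachable u z :=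
      fun z hz => ⟨(p : (fromEdges F0).Walk u v).takeUntil z hz⟩
    have hside : ∀ z ∈ (p : (fromEdges F0).Walk u v).support,
        (fromEdges (F0.erase s(a, b))).Reachable u z ∨
        (fromEdges (F0.erase s(a, b))).Reachable v z := by
      intro z hz
      rcases reach_split (a := a) (b := b) (hreachF0 z hz) with h1 | ⟨h1, h2⟩ | ⟨h1, h2⟩
      · exact Or.inl h1
      · -- u ~ a side, b ~ z: decide where v is
        rcases reach_split (a := a) (b := b)
            ((hF0same u v).mp hEuv) with h3 | ⟨h3, h4⟩ | ⟨h3, h4⟩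
        · exact absurd h3 hnuv1
        · -- u ~ a and b ~ v, so z (~ b) is on v's side
          exact Or.inr (h4.symm.trans h2)
        · -- u ~ b : contradiction with u ~ a unless a ~ b
          exact absurd (h3.symm.trans h1) (fun hh => hnab1 hh.symm)
      · rcases reach_split (a := a) (b := b)
            ((hF0same u v).mp hEuv) with h3 | ⟨h3, h4⟩ | ⟨h3, h4⟩
        · exact absurd h3 hnuv1
        · exact absurd (h3.symm.trans h1) hnab1
        · exact Or.inr (h4.symm.trans h2)
    -- each endpoint of f lies on one side, and on different sides
    have hua_or : (fromEdges (F0.erase s(a, b))).Reachable u a ∨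
        (fromEdges (F0.erase s(a, b))).Reachable v a := hside a ha_sup
    have hub_or : (fromEdges (F0.erase s(a, b))).Reachable u b ∨
        (fromEdges (F0.erase s(a, b))).Reachable v b := hside b hb_sup
    have hcase : ((fromEdges (F0.erase s(a, b))).Reachable u a ∧
          (fromEdges (F0.erase s(a, b))).Reachable v b) ∨
        ((fromEdges (F0.erase s(a, b))).Reachable u b ∧
          (fromEdges (F0.erase s(a, b))).Reachable v a) := by
      rcases hua_or with h1 | h1 <;> rcases hub_or with h2 | h2
      · exact absurd (h1.symm.trans h2) hnab1
      · exact Or.inl ⟨h1, h2⟩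
      · exact Or.inr ⟨h2, h1⟩
      · exact absurd (h1.symm.trans h2) hnab1
    -- the exchanged forest
    set F1 := insert s(u, v) (F0.erase s(a, b)) with hF1def
    have he_not : s(u, v) ∉ F0.erase s(a, b) :=
      fun hh => heF0 (Finset.mem_of_mem_erase hh)
    have hm1 : fromEdges (F0.erase s(a, b)) ≤ fromEdges F1 :=
      fromEdges_mono (Finset.subset_insert _ _)
    have heuv1 : (fromEdges F1).Adj u v :=
      fromEdges_adj.2 ⟨Finset.mem_insert_self _ _, huv⟩
    have hF1ab : (fromEdges F1).Reachable a b := by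
      rcases hcase with ⟨h1, h2⟩ | ⟨h1, h2⟩
      · exact (h1.mono hm1).symm.trans (heuv1.reachable.trans (h2.mono hm1))
      · exact (h2.mono hm1).symm.trans (heuv1.symm.reachable.trans (h1.mono hm1))
    have hF1sub : F1 ⊆ E :=
      Finset.insert_subset he ((Finset.erase_subset _ _).trans hF0E)
    have hF1sf : IsSpanningForest E F1 := by
      refine ⟨hF1sub, ?_, ?_⟩
      · exact acyclic_insert
          (acyclic_anti (fromEdges_mono (Finset.erase_subset _ _)) hF0ac) hnuv1
      · intro x y
        constructor
        · intro h
          rcases reach_split (a := a) (b := b) ((hF0same x y).mp h) with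
            h1 | ⟨h1, h2⟩ | ⟨h1, h2⟩
          · exact h1.mono hm1
          · exact (h1.mono hm1).trans (hF1ab.trans (h2.mono hm1))
          · exact (h1.mono hm1).trans (hF1ab.symm.trans (h2.mono hm1))
        · intro h
          exact h.mono (fromEdges_mono hF1sub)
    have hsum : F1.sum w = w s(u, v) + (F0.sum w - w s(a, b)) := by
      rw [hF1def, Finset.sum_insert he_not, Finset.sum_erase_eq_sub hfF0]
    have hle : F1.sum w ≤ F0.sum w := by rw [hsum]; linarith
    exact ⟨F1, ⟨hF1sf, fun F'' hF'' => hle.trans (hF0min F'' hF'')⟩,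
      Finset.mem_insert_self _ _⟩
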